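/- Let S be a set and f : P_fin(S) → ℝ a submodular function attaining a minimum m on nonempty finite subsets. If A₁ and A₂ are two atoms of f (nonempty finite sets achieving m, of minimal cardinality among such sets), then A₁ = A₂ or A₁ ∩ A₂ = ∅. -/
import Mathlib


/-- Two atoms of a submodular function are equal or disjoint. -/
theorem stmt_7 {S : Type*} [DecidableEq S]
    (f : Finset S → ℝ) (m : ℝ)
    (hsub : ∀ A B : Finset S, f (A ∩ B) + f (A ∪ B) ≤ f A + f B)
    (hmin : ∀ A : Finset S, A.Nonempty → m ≤ f A)
    (A₁ A₂ : Finset S)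
    (hA₁ : A₁.Nonempty ∧ f A₁ = m ∧
      ∀ B : Finset S, B.Nonempty → f B = m → A₁.card ≤ B.card)
    (hA₂ : A₂.Nonempty ∧ f A₂ = m ∧
      ∀ B : Finset S, B.Nonempty → f B = m → A₂.card ≤ B.card) :
    A₁ = A₂ ∨ A₁ ∩ A₂ = ∅ := by
  obtain ⟨hne1, hf1, hc1⟩ := hA₁
  obtain ⟨hne2, hf2, hc2⟩ := hA₂
  by_cases h : A₁ ∩ A₂ = ∅
  · exact Or.inr h
  left
  have hI : (A₁ ∩ A₂).Nonempty := Finset.nonempty_iff_ne_empty.mpr h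
  have hU : (A₁ ∪ A₂).Nonempty := hne1.mono Finset.subset_union_left
  have hsm := hsub A₁ A₂
  have h1 : m ≤ f (A₁ ∩ A₂) := hmin _ hI
  have h2 : m ≤ f (A₁ ∪ A₂) := hmin _ hU
  have hfI : f (A₁ ∩ A₂) = m := by
    rw [hf1, hf2] at hsm; linarith
  have hcard1 : A₁.card ≤ (A₁ ∩ A₂).card := hc1 _ hI hfI
  have hcard2 : A₂.card ≤ (A₁ ∩ A₂).card := hc2 _ hI hfI
  have e1 : A₁ ∩ A₂ = A₁ :=
    Finset.eq_of_subset_of_card_le Finset.inter_subset_left hcard1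
  have e2 : A₁ ∩ A₂ = A₂ :=
    Finset.eq_of_subset_of_card_le Finset.inter_subset_right hcard2
  rw [← e1, e2]
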